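/- Let n ≥ 1. For every natural number k, the number of compositions of k into parts from the set {1, 2, ..., n} (finite ordered sequences of elements of {1,...,n} summing to k) equals the n-bonacci number F_{k+n-1}^{(n)}. -/

import Mathlib

/-- Finset of compositions of `k` into parts from `{1,…,n}`. -/
def Slist (n : ℕ) : ℕ → Finset (List ℕ)
  | 0 => {([] : List ℕ)}
  | (k+1) => (Finset.range (min n (k+1))).biUnion fun i =>
      (Slist n (k - i)).image fun l => (i+1) :: l
  termination_by k => k
  decreasing_by exact Nat.lt_succ_of_le (Nat.sub_le k i)

lemma mem_Slist (n : ℕ) : ∀ k l, l ∈ Slist n k ↔ (∀ x ∈ l, 1 ≤ x ∧ x ≤ n) ∧ l.sum = k := by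
  intro k
  induction k using Nat.strong_induction_on with
  | _ k ih =>
    intro l
    match k with
    | 0 =>
      rw [Slist]
      simp only [Finset.mem_singleton]
      constructor
      · rintro rfl; simp
      · rintro ⟨h1, h2⟩
        cases l with
        | nil => rfl
        | cons a t =>
          exfalso
          have := h1 a (by simp)
          simp [List.sum_cons] at h2
          omega
    | (k+1) =>
      rw [Slist]
      simp only [Finset.mem_biUnion, Finset.mem_image, Finset.mem_range]
      constructor
      · rintro ⟨i, hi, l', hl', rfl⟩
        rw [ih (k - i) (Nat.lt_succ_of_le (Nat.sub_le k i))] at hl'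
        obtain ⟨h1, h2⟩ := hl'
        refine ⟨?_, ?_⟩
        · intro x hx
          rcases List.mem_cons.mp hx with rfl | hx
          · omega
          · exact h1 x hx
        · simp [List.sum_cons, h2]; omega
      · rintro ⟨h1, h2⟩
        cases l with
        | nil => simp at h2
        | cons a t =>
          have ha := h1 a (by simp)
          simp only [List.sum_cons] at h2
          refine ⟨a - 1, by omega, t, ?_, by congr 1; omega⟩
          rw [ih (k - (a-1)) (Nat.lt_succ_of_le (Nat.sub_le k (a-1)))]
          exact ⟨fun x hx => h1 x (List.mem_cons_of_mem a hx), by omega⟩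

lemma card_Slist_succ (n k : ℕ) :
    (Slist n (k+1)).card = ∑ i ∈ Finset.range (min n (k+1)), (Slist n (k-i)).card := by
  rw [Slist, Finset.card_biUnion]
  · exact Finset.sum_congr rfl fun i _ =>
      Finset.card_image_of_injective _ (List.cons_injective)
  · intro i _ j _ hij
    rw [Function.onFun, Finset.disjoint_left]
    rintro l h1 h2
    obtain ⟨l1, -, rfl⟩ := Finset.mem_image.mp h1
    obtain ⟨l2, -, h⟩ := Finset.mem_image.mp h2
    exact hij (by injection h.symm with h' _; omega)

/-- The number of compositions of `k` into parts from `{1, 2, …, n}` equals the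
`n`-bonacci number `F (k + n - 1)`. -/
theorem card_compositions_nbonacci (n : ℕ) (hn : 1 ≤ n) (F : ℕ → ℕ)
    (hF0 : ∀ k < n - 1, F k = 0) (hF1 : F (n - 1) = 1)
    (hFrec : ∀ k : ℕ, F (k + n) = ∑ i ∈ Finset.range n, F (k + i)) :
    ∀ k : ℕ,
      Nat.card {l : List ℕ // (∀ x ∈ l, 1 ≤ x ∧ x ≤ n) ∧ l.sum = k} = F (k + n - 1) := by
  have key : ∀ k : ℕ, F (k + n - 1) = (Slist n k).card := by
    intro k
    induction k using Nat.strong_induction_on with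
    | _ k ih =>
      match k with
      | 0 =>
        simp only [Nat.zero_add]
        rw [hF1, Slist]; simp
      | (k+1) =>
        have h1 : k + 1 + n - 1 = k + n := by omega
        rw [h1, hFrec k, card_Slist_succ, ← Finset.sum_range_reflect (fun i => F (k + i)) n]
        rw [← Finset.sum_subset (Finset.range_subset_range.mpr (Nat.min_le_left n (k+1)))
          (by intro j hj hj2
              simp only [Finset.mem_range] at hj hj2
              have : k + 1 ≤ j := by omega
              exact hF0 _ (by omega))]
        refine Finset.sum_congr rfl fun j hj => ?_
        simp only [Finset.mem_range, lt_min_iff] at hj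
        have h2 : k + (n - 1 - j) = (k - j) + n - 1 := by omega
        rw [h2, ih (k - j) (Nat.lt_succ_of_le (Nat.sub_le k j))]
  intro k
  rw [key k, ← Nat.card_eq_finsetCard (Slist n k)]
  exact Nat.card_congr (Equiv.subtypeEquivRight fun l => (mem_Slist n k l).symm)
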